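/- Let G be a group, A a group, and μ : A^M → A a group homomorphism with finite M ⊆ G; let H ≤ G contain M. If the cellular automaton τ_G : A^G → A^G with local defining map μ is surjective, then the cellular automaton τ_H : A^H → A^H with the same local defining map is surjective. -/
import Mathlib

/-- for a group homomorphism local defining map `μ : A^M → A`
with `M ⊆ H ≤ G`, if the induced cellular automaton over `G` is surjective then
the induced cellular automaton over `H` is surjective. -/
theorem stmt17 {G A : Type*} [Group G] [Group A] (H : Subgroup G)
    (M : Finset G) (hM : ∀ m ∈ M, m ∈ H)
    (μ : (M → A) → A) (hμ : ∀ u v : M → A, μ (u * v) = μ u * μ v)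
    (τG : (G → A) → (G → A)) (τH : (H → A) → (H → A))
    (hτG : ∀ (c : G → A) (g : G), τG c g = μ (fun m => c (g * m.1)))
    (hτH : ∀ (c : H → A) (h : H), τH c h = μ (fun m => c (h * ⟨m.1, hM m.1 m.2⟩)))
    (hsurj : Function.Surjective τG) : Function.Surjective τH := by
  intro d
  classical
  obtain ⟨c, hc⟩ := hsurj (fun g => if hg : g ∈ H then d ⟨g, hg⟩ else 1)
  refine ⟨fun h => c h, ?_⟩
  funext h
  rw [hτH]
  have := congrFun hc (h : G)
  rw [hτG] at this
  simpa [h.2] using this
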